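/- For every non-negative integer n and real k with 0 ≤ k² ≤ 1/2 and k ≠ 1: |₂F₁(-n, 1/2; 1; 1/(1-k²))| ≤ 1; and for 1/2 ≤ k² < 1: |₂F₁(-n, 1/2; 1; 1/(1-k²))| ≤ (k²/(1-k²))^n. -/

import Mathlib

open Finset Real intervalIntegral

noncomputable def poch (a : ℝ) (k : ℕ) : ℝ := ∏ i ∈ Finset.range k, (a + i)

lemma poch_neg (n : ℕ) : ∀ i, i ≤ n → poch (-(n : ℝ)) i = (-1) ^ i * (n.descFactorial i : ℝ)
  | 0, _ => by simp [poch]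
  | (i+1), h => by
    rw [poch, Finset.prod_range_succ, ← poch, poch_neg n i (Nat.le_of_succ_le h),
      Nat.descFactorial_succ]
    have : -(n : ℝ) + i = -((n - i : ℕ) : ℝ) := by
      have := Nat.le_of_succ_le h
      push_cast [Nat.cast_sub this]; ring
    rw [this]
    push_cast
    ring

lemma poch_half (i : ℕ) :
    poch (1/2) i / (Nat.factorial i : ℝ) = ∏ j ∈ Finset.range i, (2 * (j : ℝ) + 1) / (2 * j + 2) := by
  rw [poch, ← Finset.prod_range_add_one_eq_factorial]
  push_cast
  rw [← Finset.prod_div_distrib]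
  refine Finset.prod_congr rfl fun j _ => ?_
  rw [div_eq_div_iff] <;> [ring; positivity; positivity]

/-- Terminating hypergeometric polynomial ₂F₁(-n, 1/2; 1; x). -/
noncomputable def termF (n : ℕ) (x : ℝ) : ℝ :=
  ∑ i ∈ Finset.range (n + 1),
    poch (-(n : ℝ)) i * poch (1 / 2) i / ((Nat.factorial i) * (Nat.factorial i)) * x ^ i

lemma termF_eq (n : ℕ) (x : ℝ) :
    termF n x = (1 / π) * ∫ θ in (0:ℝ)..π, (1 - x * Real.sin θ ^ 2) ^ n := by
  have hcont : ∀ i : ℕ, Continuous fun θ : ℝ => (n.choose i : ℝ) * (-(x * Real.sin θ ^ 2)) ^ i :=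
    fun i => by fun_prop
  have hexp : ∀ θ : ℝ, (1 - x * Real.sin θ ^ 2) ^ n
      = ∑ i ∈ Finset.range (n+1), (n.choose i : ℝ) * (-(x * Real.sin θ ^ 2)) ^ i := by
    intro θ
    have := add_pow (-(x * Real.sin θ ^ 2)) 1 n
    simp only [one_pow, mul_one] at this
    rw [show (1 : ℝ) - x * Real.sin θ ^ 2 = -(x * Real.sin θ ^ 2) + 1 by ring, this]
    exact Finset.sum_congr rfl fun i _ => by ring
  have h1 : (∫ θ in (0:ℝ)..π, (1 - x * Real.sin θ ^ 2) ^ n)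
      = ∑ i ∈ Finset.range (n+1), (n.choose i : ℝ) * (-x) ^ i * (π * ∏ j ∈ Finset.range i, (2 * (j:ℝ) + 1) / (2 * j + 2)) := by
    simp only [hexp]
    rw [intervalIntegral.integral_finset_sum (fun i _ => ((hcont i).intervalIntegrable _ _))]
    refine Finset.sum_congr rfl fun i _ => ?_
    have : ∀ θ : ℝ, (n.choose i : ℝ) * (-(x * Real.sin θ ^ 2)) ^ i
        = ((n.choose i : ℝ) * (-x) ^ i) * Real.sin θ ^ (2 * i) := by
      intro θ; rw [pow_mul]; ring
    simp only [this]
    rw [intervalIntegral.integral_const_mul, integral_sin_pow_even]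
  rw [h1, Finset.mul_sum, termF]
  refine Finset.sum_congr rfl fun i hi => ?_
  rw [poch_neg n i (Nat.lt_succ_iff.mp (Finset.mem_range.mp hi)), Nat.descFactorial_eq_factorial_mul_choose]
  have hh := poch_half i
  have hπ : (π : ℝ) ≠ 0 := Real.pi_ne_zero
  have hf : (Nat.factorial i : ℝ) ≠ 0 := by positivity
  field_simp at hh ⊢
  linear_combination (norm := (push_cast; ring1)) ((-1:ℝ)^i * (Nat.factorial i : ℝ) * (n.choose i : ℝ) * x^i) * hh

lemma abs_termF_le (n : ℕ) (k : ℝ) (h1 : k ^ 2 < 1) :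
    |termF n (1 / (1 - k ^ 2))| ≤ (max (k ^ 2) (1 - k ^ 2) / (1 - k ^ 2)) ^ n := by
  have hpos : 0 < 1 - k ^ 2 := by linarith
  set M := max (k ^ 2) (1 - k ^ 2) / (1 - k ^ 2) with hM
  have hM1 : 1 ≤ M := by
    rw [hM, le_div_iff₀ hpos, one_mul]; exact le_max_right _ _
  have hM2 : k ^ 2 / (1 - k ^ 2) ≤ M := by
    rw [hM]; gcongr; exact le_max_left _ _
  have hbound : ∀ θ : ℝ, ‖(1 - (1 / (1 - k ^ 2)) * Real.sin θ ^ 2) ^ n‖ ≤ M ^ n := by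
    intro θ
    rw [norm_pow, Real.norm_eq_abs]
    apply pow_le_pow_left₀ (abs_nonneg _) _ n
    rw [abs_le]
    have hs0 : 0 ≤ Real.sin θ ^ 2 := sq_nonneg _
    have hs1 : Real.sin θ ^ 2 ≤ 1 := Real.sin_sq_le_one θ
    have hinv : 0 < 1 / (1 - k ^ 2) := by positivity
    have h2 : (1 / (1 - k ^ 2)) * Real.sin θ ^ 2 ≤ 1 / (1 - k ^ 2) :=
      mul_le_of_le_one_right hinv.le hs1
    have h3 : (1 : ℝ) - 1 / (1 - k ^ 2) = -(k ^ 2 / (1 - k ^ 2)) := by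
      field_simp
      ring
    have h4 : 0 ≤ (1 / (1 - k ^ 2)) * Real.sin θ ^ 2 := by positivity
    constructor <;> nlinarith
  rw [termF_eq, abs_mul, abs_of_nonneg (by positivity : (0:ℝ) ≤ 1 / π)]
  have key := intervalIntegral.norm_integral_le_of_norm_le_const
    (C := M ^ n) (f := fun θ : ℝ => (1 - (1 / (1 - k ^ 2)) * Real.sin θ ^ 2) ^ n)
    (a := 0) (b := π) (fun θ _ => hbound θ)
  rw [Real.norm_eq_abs] at key
  calc (1 / π) * |∫ θ in (0:ℝ)..π, (1 - (1 / (1 - k ^ 2)) * Real.sin θ ^ 2) ^ n|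
      ≤ (1 / π) * (M ^ n * |π - 0|) := by
        apply mul_le_mul_of_nonneg_left key (by positivity)
    _ = M ^ n := by
        rw [sub_zero, abs_of_pos Real.pi_pos]
        field_simp

theorem termF_bound (n : ℕ) (k : ℝ) :
    (0 ≤ k ^ 2 → k ^ 2 ≤ 1 / 2 → k ≠ 1 → |termF n (1 / (1 - k ^ 2))| ≤ 1) ∧
    (1 / 2 ≤ k ^ 2 → k ^ 2 < 1 →
      |termF n (1 / (1 - k ^ 2))| ≤ (k ^ 2 / (1 - k ^ 2)) ^ n) := by
  constructor
  · intro _ h2 _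
    have h1 : k ^ 2 < 1 := by linarith
    have := abs_termF_le n k h1
    rwa [max_eq_right (by linarith), div_self (by linarith), one_pow] at this
  · intro h2 h1
    have := abs_termF_le n k h1
    rwa [max_eq_left (by linarith)] at this
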